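/- Let G be a finite non-trivial abelian group of exponent m, and let B_1, …, B_k be generating subsets of G. If k > 2·m·ln(log₂|G|), then B₁* + ⋯ + B_k* = G; equivalently, every element g ∈ G can be written as g = ∑_{i=1}^k ∑_{a∈A_i} a for some subsets A_i ⊆ B_i. -/

import Mathlib

open Finset Pointwise

/-- The subset-sum set of a finite set `B`: all sums `∑_{a ∈ A} a` over `A ⊆ B`. -/
def subsetSums {G : Type*} [AddCommMonoid G] [DecidableEq G] (B : Finset G) : Finset G :=
  B.powerset.image fun A => A.sum id

namespace SubsetSumsAux

variable {G : Type*} [AddCommGroup G] [DecidableEq G]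

lemma sum_mem_subsetSums {A B : Finset G} (h : A ⊆ B) : A.sum id ∈ subsetSums B :=
  Finset.mem_image.2 ⟨A, Finset.mem_powerset.2 h, rfl⟩

lemma zero_mem_subsetSums (B : Finset G) : 0 ∈ subsetSums B := by
  simpa using sum_mem_subsetSums (Finset.empty_subset B)

lemma mem_subsetSums_of_mem {B : Finset G} {b : G} (hb : b ∈ B) : b ∈ subsetSums B := by
  simpa using sum_mem_subsetSums (Finset.singleton_subset_iff.2 hb)

/-- coefficient functions bounded by `h` give elements of `h • subsetSums B`. -/
lemma bounded_coeff_mem (B : Finset G) :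
    ∀ (h : ℕ) (c : G → ℕ), (∀ b ∈ B, c b ≤ h) → (∑ b ∈ B, c b • b) ∈ h • subsetSums B := by
  intro h
  induction h with
  | zero =>
      intro c hc
      have hz : ∑ b ∈ B, c b • b = 0 := Finset.sum_eq_zero fun b hb => by
        have : c b = 0 := Nat.le_zero.1 (hc b hb)
        simp [this]
      rw [hz, zero_nsmul]
      exact Finset.mem_zero.2 rfl
  | succ h ih =>
      intro c hc
      set A := B.filter (fun b => c b ≠ 0) with hA
      have hterm : ∀ b ∈ B, c b • b = (c b - 1) • b + (if c b ≠ 0 then b else 0) := by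
        intro b hb
        by_cases h0 : c b = 0
        · simp [h0]
        · rw [if_pos h0]
          have hcb : c b = (c b - 1) + 1 := by omega
          calc c b • b = ((c b - 1) + 1) • b := by rw [← hcb]
          _ = (c b - 1) • b + b := succ_nsmul b (c b - 1)
      have hsplit : ∑ b ∈ B, c b • b
          = (∑ b ∈ B, (c b - 1) • b) + ∑ b ∈ B, (if c b ≠ 0 then b else 0) := by
        rw [← Finset.sum_add_distrib]
        exact Finset.sum_congr rfl hterm
      have hAsum : ∑ b ∈ B, (if c b ≠ 0 then b else 0) = A.sum id := by
        rw [hA, Finset.sum_filter]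
        simp
      have h1 : (∑ b ∈ B, (c b - 1) • b) ∈ h • subsetSums B :=
        ih _ (fun b hb => by have := hc b hb; omega)
      have h2 : A.sum id ∈ subsetSums B := sum_mem_subsetSums (Finset.filter_subset _ _)
      rw [hsplit, hAsum, succ_nsmul]
      exact Finset.add_mem_add h1 h2

lemma exists_coeff {B : Finset G} (hB : AddSubgroup.closure (B : Set G) = ⊤)
    {m : ℕ} (hm : AddMonoid.exponent G = m) (hm1 : 1 ≤ m) (g : G) :
    ∃ c : G → ℕ, g = ∑ b ∈ B, c b • b := by
  have hg : g ∈ AddSubgroup.closure (B : Set G) := by rw [hB]; trivial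
  refine AddSubgroup.closure_induction (p := fun x _ => ∃ c : G → ℕ, x = ∑ b ∈ B, c b • b)
    ?_ ?_ ?_ ?_ hg
  · intro x hx
    refine ⟨fun y => if y = x then 1 else 0, ?_⟩
    have : ∀ b ∈ B, (if b = x then (1:ℕ) else 0) • b = (if b = x then b else 0) := by
      intro b _; split_ifs <;> simp
    rw [Finset.sum_congr rfl this, Finset.sum_ite_eq' B x (fun b => b), if_pos (by exact_mod_cast hx)]
  · exact ⟨fun _ => 0, by simp⟩
  · rintro x y _ _ ⟨c1, rfl⟩ ⟨c2, rfl⟩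
    exact ⟨c1 + c2, by simp [add_smul, Finset.sum_add_distrib]⟩
  · rintro x _ ⟨c, rfl⟩
    refine ⟨fun b => (m - 1) * c b, ?_⟩
    have hsum : ∑ b ∈ B, ((m - 1) * c b) • b = (m - 1) • ∑ b ∈ B, c b • b := by
      rw [Finset.smul_sum]
      exact Finset.sum_congr rfl fun b _ => by rw [mul_smul]
    rw [hsum]
    set x := ∑ b ∈ B, c b • b
    have hmx : m • x = 0 := by rw [← hm]; exact AddMonoid.exponent_nsmul_eq_zero x
    have : (m - 1) • x + x = 0 := by
      have : (m - 1) + 1 = m := by omega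
      rw [← succ_nsmul, this, hmx]
    exact neg_eq_of_add_eq_zero_left this

variable [Fintype G]

lemma univ_subset_nsmul {B : Finset G} (hB : AddSubgroup.closure (B : Set G) = ⊤)
    {m : ℕ} (hm : AddMonoid.exponent G = m) (hm1 : 1 ≤ m) :
    (Finset.univ : Finset G) ⊆ (m - 1) • subsetSums B := by
  intro g _
  obtain ⟨c, rfl⟩ := exists_coeff hB hm hm1 g
  have hmod : ∑ b ∈ B, c b • b = ∑ b ∈ B, (c b % m) • b := by
    refine Finset.sum_congr rfl fun b _ => ?_
    have hb0 : (m * (c b / m)) • b = 0 := by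
      rw [mul_comm, mul_smul]
      have : m • b = 0 := by rw [← hm]; exact AddMonoid.exponent_nsmul_eq_zero b
      rw [this, smul_zero]
    calc c b • b = (c b % m + m * (c b / m)) • b := by rw [Nat.mod_add_div]
    _ = (c b % m) • b + (m * (c b / m)) • b := add_nsmul b _ _
    _ = (c b % m) • b := by rw [hb0, add_zero]
  rw [hmod]
  exact bounded_coeff_mem B (m - 1) _ (fun b _ => by
    have := Nat.mod_lt (c b) (show 0 < m by omega); omega)

lemma zero_mem_listsum : ∀ l : List (Finset G), (0:G) ∈ (l.map subsetSums).sum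
  | [] => by simp
  | S :: l => by
      rw [List.map_cons, List.sum_cons]
      simpa using Finset.add_mem_add (zero_mem_subsetSums S) (zero_mem_listsum l)

lemma univ_add_eq {Z : Finset G} (hZ : (0:G) ∈ Z) : (Finset.univ : Finset G) + Z = Finset.univ := by
  apply Finset.eq_univ_of_forall
  intro g
  exact Finset.mem_add.2 ⟨g, Finset.mem_univ _, 0, hZ, by simp⟩

lemma add_eq_univ_of_card {X Y : Finset G} (h : Fintype.card G < X.card + Y.card) :
    X + Y = Finset.univ := by
  apply Finset.eq_univ_of_forall
  intro g
  set T := Y.image (fun y => g - y) with hT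
  have hTcard : T.card = Y.card := Finset.card_image_of_injective _ sub_right_injective
  have hinter : (X ∩ T).Nonempty := by
    rw [← Finset.card_pos]
    by_contra h0
    push_neg at h0
    have hdisj : Disjoint X T := by
      rw [Finset.disjoint_iff_inter_eq_empty, ← Finset.card_eq_zero]; omega
    have := Finset.card_union_of_disjoint hdisj
    have hle := Finset.card_le_univ (X ∪ T)
    omega
  obtain ⟨z, hz⟩ := hinter
  have hzX := (Finset.mem_inter.1 hz).1
  have hzT := (Finset.mem_inter.1 hz).2
  rw [hT, Finset.mem_image] at hzT
  obtain ⟨y, hy, hzy⟩ := hzT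
  exact Finset.mem_add.2 ⟨z, hzX, y, hy, by rw [← hzy]; abel⟩

/-- stabilizer argument: if adding the subset-sums of a generating set doesn't grow a
(nonempty) set, it is everything. -/
lemma eq_univ_of_add_subsetSums_eq {S X : Finset G}
    (hS : AddSubgroup.closure (S : Set G) = ⊤) (hX : (0:G) ∈ X)
    (h : subsetSums S + X = X) : X = Finset.univ := by
  have key : ∀ g : G, ∀ x ∈ X, x + g ∈ X := by
    intro g
    have hg : g ∈ AddSubgroup.closure (S : Set G) := by rw [hS]; trivial
    refine AddSubgroup.closure_induction (p := fun y _ => ∀ x ∈ X, x + y ∈ X) ?_ ?_ ?_ ?_ hg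
    · intro s hs x hx
      have hsS : s ∈ subsetSums S := mem_subsetSums_of_mem (by exact_mod_cast hs)
      have : s + x ∈ subsetSums S + X := Finset.add_mem_add hsS hx
      rw [h] at this
      rwa [add_comm]
    · intro x hx; simpa using hx
    · intro a b _ _ ha hb x hx
      have := hb (x + a) (ha x hx)
      rwa [add_assoc] at this
    · intro a _ ha x hx
      have himg : X.image (· + a) ⊆ X := by
        intro y hy
        rw [Finset.mem_image] at hy
        obtain ⟨w, hw, rfl⟩ := hy
        exact ha w hw
      have hcard : X.card ≤ (X.image (· + a)).card := by
        rw [Finset.card_image_of_injective _ (add_left_injective a)]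
      have heq : X.image (· + a) = X := Finset.eq_of_subset_of_card_le himg hcard
      have hx' : x ∈ X.image (· + a) := by rw [heq]; exact hx
      rw [Finset.mem_image] at hx'
      obtain ⟨w, hw, hwx⟩ := hx'
      have : x + -a = w := by rw [← hwx]; abel
      rwa [this]
  apply Finset.eq_univ_of_forall
  intro g
  simpa using key g 0 hX

lemma subset_add_subsetSums {S X : Finset G} : X ⊆ subsetSums S + X := by
  intro x hx
  simpa using Finset.add_mem_add (zero_mem_subsetSums S) hx

/-- strict growth: the sum of the subset-sums of `j` generating sets has at least
`min n (j+1)` elements. -/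
lemma card_listsum_ge : ∀ l : List (Finset G),
    (∀ S ∈ l, AddSubgroup.closure (S : Set G) = ⊤) →
    min (Fintype.card G) (l.length + 1) ≤ (l.map subsetSums).sum.card := by
  intro l
  induction l with
  | nil => simpa using min_le_right (Fintype.card G) 1
  | cons S l ih =>
      intro hgen
      have hS : AddSubgroup.closure (S : Set G) = ⊤ := hgen S List.mem_cons_self
      have hl := fun T hT => hgen T (List.mem_cons_of_mem S hT)
      set X := (l.map subsetSums).sum with hXdef
      have hX0 : (0:G) ∈ X := zero_mem_listsum l
      rw [List.map_cons, List.sum_cons]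
      have hsub : X ⊆ subsetSums S + X := subset_add_subsetSums
      by_cases hu : X = Finset.univ
      · have : (Finset.univ : Finset G) ⊆ subsetSums S + X := hu ▸ hsub
        have heq : subsetSums S + X = Finset.univ :=
          Finset.eq_univ_of_forall fun g => this (Finset.mem_univ g)
        rw [heq, Finset.card_univ]
        exact min_le_left _ _
      · have hne : subsetSums S + X ≠ X := by
          intro heq
          exact hu (eq_univ_of_add_subsetSums_eq hS hX0 heq)
        have hlt : X.card < (subsetSums S + X).card :=
          Finset.card_lt_card (hsub.ssubset_of_ne (Ne.symm hne))
        have hXge := ih hl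
        rcases le_or_gt (Fintype.card G) (l.length + 1) with hc | hc
        · have : Fintype.card G ≤ X.card := le_trans (by simp [min_eq_left hc]) hXge
          calc min (Fintype.card G) (l.length + 1 + 1) ≤ Fintype.card G := min_le_left _ _
          _ ≤ X.card := this
          _ ≤ _ := le_of_lt hlt
        · have : l.length + 1 ≤ X.card := le_trans (by simp [min_eq_right (le_of_lt hc)]) hXge
          calc min (Fintype.card G) (l.length + 1 + 1) ≤ l.length + 1 + 1 := min_le_right _ _
          _ ≤ X.card + 1 := by omega
          _ ≤ _ := hlt

lemma chain {m : ℕ} (hm : AddMonoid.exponent G = m) (hm3 : 3 ≤ m) :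
    ∀ l : List (Finset G), (∀ S ∈ l, AddSubgroup.closure (S : Set G) = ⊤) →
      Real.log (Fintype.card G) - Real.log ((l.map subsetSums).sum.card)
        ≤ (((m:ℝ) - 2)/((m:ℝ) - 1)) ^ l.length * Real.log (Fintype.card G) := by
  have hn1 : 1 ≤ Fintype.card G := Fintype.card_pos
  have hmR : (3:ℝ) ≤ (m:ℝ) := by exact_mod_cast hm3
  intro l
  induction l with
  | nil =>
      intro _
      have h0 : ((List.map subsetSums ([] : List (Finset G))).sum : Finset G) = {0} := rfl
      rw [h0, Finset.card_singleton]
      simp only [Nat.cast_one, Real.log_one, List.length_nil, pow_zero, one_mul, sub_zero]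
      exact le_rfl
  | cons S l ih =>
      intro hgen
      have hS : AddSubgroup.closure (S : Set G) = ⊤ := hgen S List.mem_cons_self
      have hl := fun T hT => hgen T (List.mem_cons_of_mem S hT)
      have ihl := ih hl
      set X := (l.map subsetSums).sum with hXdef
      have hX0 : (0:G) ∈ X := zero_mem_listsum l
      have hXne : X.Nonempty := ⟨0, hX0⟩
      rw [List.map_cons, List.sum_cons]
      set X' := subsetSums S + X with hX'def
      have hPR0 : ((Fintype.card G : ℕ) : ℚ≥0)
          ≤ (((X + subsetSums S).card : ℚ≥0) / (X.card : ℚ≥0)) ^ (m-1) * (X.card : ℚ≥0) := by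
        refine le_trans ?_ (Finset.pluennecke_ruzsa_inequality_nsmul_add hXne (subsetSums S) (m-1))
        have hsub := univ_subset_nsmul hS hm (by omega)
        have hcard := Finset.card_le_card hsub
        rw [Finset.card_univ] at hcard
        exact_mod_cast hcard
      have hcomm : X + subsetSums S = X' := by rw [hX'def, add_comm]
      rw [hcomm] at hPR0
      have hx1 : 1 ≤ X.card := Finset.card_pos.2 hXne
      have hX0' : (0:G) ∈ X' := subset_add_subsetSums hX0
      have hx'1 : 1 ≤ X'.card := Finset.card_pos.2 ⟨0, hX0'⟩
      have hPR : ((Fintype.card G : ℝ))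
          ≤ (((X'.card:ℝ)) / ((X.card:ℝ))) ^ (m-1) * ((X.card:ℝ)) := by
        have h2 : (((Fintype.card G : ℕ):ℚ≥0):ℝ)
            ≤ (((((X'.card : ℚ≥0)) / ((X.card : ℚ≥0))) ^ (m-1) * ((X.card : ℚ≥0)) : ℚ≥0):ℝ) := by
          exact_mod_cast hPR0
        push_cast at h2
        exact_mod_cast h2
      have hxpos : (0:ℝ) < (X.card:ℝ) := by exact_mod_cast hx1
      have hx'pos : (0:ℝ) < (X'.card:ℝ) := by exact_mod_cast hx'1
      have hnpos : (0:ℝ) < ((Fintype.card G : ℕ):ℝ) := by exact_mod_cast hn1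
      have hlog1 : Real.log (Fintype.card G)
          ≤ ((m:ℝ) - 1) * (Real.log (X'.card:ℝ) - Real.log (X.card:ℝ)) + Real.log (X.card:ℝ) := by
        have h0 := Real.log_le_log hnpos hPR
        rw [Real.log_mul (by positivity) (ne_of_gt hxpos), Real.log_pow,
          Real.log_div (ne_of_gt hx'pos) (ne_of_gt hxpos)] at h0
        have hcast : ((m - 1 : ℕ) : ℝ) = (m:ℝ) - 1 := by
          rw [Nat.cast_sub (by omega : 1 ≤ m), Nat.cast_one]
        rw [hcast] at h0
        linarith
      have hMpos : (0:ℝ) < (m:ℝ) - 1 := by linarith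
      have hstep : Real.log (Fintype.card G) - Real.log (X'.card:ℝ)
          ≤ (((m:ℝ)-2)/((m:ℝ)-1)) * (Real.log (Fintype.card G) - Real.log (X.card:ℝ)) := by
        rw [div_mul_eq_mul_div, le_div_iff₀ hMpos]
        nlinarith [hlog1]
      have hc0 : (0:ℝ) ≤ ((m:ℝ)-2)/((m:ℝ)-1) := by
        apply div_nonneg <;> linarith
      calc Real.log (Fintype.card G) - Real.log (X'.card:ℝ) ≤ _ := hstep
      _ ≤ (((m:ℝ)-2)/((m:ℝ)-1)) * ((((m:ℝ)-2)/((m:ℝ)-1)) ^ l.length * Real.log (Fintype.card G)) :=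
            mul_le_mul_of_nonneg_left ihl hc0
      _ = (((m:ℝ)-2)/((m:ℝ)-1)) ^ (S :: l).length * Real.log (Fintype.card G) := by
            rw [List.length_cons]; ring


/-- helper for rpow bounds: `2^(p/q) ≤ a` from `2^p ≤ a^q`. -/
lemma rpow_le_of_pow {a : ℝ} (ha : 0 ≤ a) (p q : ℕ) (hq : q ≠ 0)
    (h : (2:ℝ)^p ≤ a^q) : (2:ℝ) ^ ((p:ℝ)/(q:ℝ)) ≤ a := by
  apply le_of_pow_le_pow_left₀ hq ha
  have hpq : ((2:ℝ) ^ ((p:ℝ)/(q:ℝ))) ^ (q:ℕ) = (2:ℝ)^(p:ℕ) := by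
    rw [← Real.rpow_natCast ((2:ℝ)^((p:ℝ)/(q:ℝ))) q, ← Real.rpow_mul (by norm_num : (0:ℝ) ≤ 2),
      div_mul_cancel₀ _ (by exact_mod_cast hq : ((q:ℝ) ≠ 0)), Real.rpow_natCast]
  rw [hpq]; exact h

lemma log_two_gt_twothirds : (2/3:ℝ) < Real.log 2 := by
  rw [Real.lt_log_iff_exp_lt (by norm_num : (0:ℝ) < 2)]
  have h3 : Real.exp (2/3:ℝ) ^ (3:ℕ) = Real.exp 1 ^ (2:ℕ) := by
    rw [← Real.exp_nat_mul, ← Real.exp_nat_mul]; norm_num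
  have hexp1 : Real.exp 1 < 2.7182818286 := Real.exp_one_lt_d9
  have h8 : Real.exp (2/3:ℝ) ^ (3:ℕ) < (2:ℝ)^(3:ℕ) := by
    rw [h3]
    have h1 : Real.exp 1 ^ (2:ℕ) < (2.7182818286:ℝ)^(2:ℕ) := by
      apply pow_lt_pow_left₀ hexp1 (le_of_lt (Real.exp_pos 1))
      norm_num
    nlinarith [h1]
  exact lt_of_pow_lt_pow_left₀ 3 (by norm_num) h8

lemma log_threehalf_gt_sixth : (1/6:ℝ) < Real.log (3/2:ℝ) := by
  rw [Real.lt_log_iff_exp_lt (by norm_num : (0:ℝ) < 3/2)]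
  have h6 : Real.exp (1/6:ℝ) ^ (6:ℕ) = Real.exp 1 := by
    rw [← Real.exp_nat_mul]; norm_num
  have hexp1 : Real.exp 1 < 2.7182818286 := Real.exp_one_lt_d9
  have h8 : Real.exp (1/6:ℝ) ^ (6:ℕ) < (3/2:ℝ)^(6:ℕ) := by
    rw [h6]; nlinarith [hexp1]
  exact lt_of_pow_lt_pow_left₀ 6 (by norm_num) h8

end SubsetSumsAux

open SubsetSumsAux in
theorem stmt4 {G : Type*} [AddCommGroup G] [Fintype G] [DecidableEq G] [Nontrivial G]
    (m : ℕ) (hm : AddMonoid.exponent G = m)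
    (k : ℕ) (B : Fin k → Finset G)
    (hB : ∀ i, AddSubgroup.closure ((B i : Set G)) = ⊤)
    (hk : (k : ℝ) > 2 * m * Real.log (Real.logb 2 (Fintype.card G))) :
    (∑ i, subsetSums (B i)) = Finset.univ := by
  classical
  have hn2 : 2 ≤ Fintype.card G := Fintype.one_lt_card
  have hnR : (2:ℝ) ≤ (Fintype.card G : ℝ) := by exact_mod_cast hn2
  have hm1 : 1 ≤ m := by
    rw [← hm]
    exact Nat.one_le_iff_ne_zero.2 AddMonoid.exponent_ne_zero_of_finite
  have hm2 : 2 ≤ m := by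
    rcases Nat.lt_or_ge m 2 with h | h
    · exfalso
      have hm1' : m = 1 := by omega
      obtain ⟨a, b, hab⟩ := exists_pair_ne G
      apply hab
      have ha : a = 0 := by
        have := AddMonoid.exponent_nsmul_eq_zero a
        rwa [hm, hm1', one_nsmul] at this
      have hb : b = 0 := by
        have := AddMonoid.exponent_nsmul_eq_zero b
        rwa [hm, hm1', one_nsmul] at this
      rw [ha, hb]
    · exact h
  have hLge1 : (1:ℝ) ≤ Real.logb 2 (Fintype.card G) := by
    rw [Real.le_logb_iff_rpow_le (by norm_num) (by positivity), Real.rpow_one]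
    exact hnR
  have hLpos : (0:ℝ) < Real.logb 2 (Fintype.card G) := lt_of_lt_of_le one_pos hLge1
  have hlogL0 : (0:ℝ) ≤ Real.log (Real.logb 2 (Fintype.card G)) := Real.log_nonneg hLge1
  have hk1 : 1 ≤ k := by
    by_contra h
    have hk0 : k = 0 := by omega
    rw [hk0] at hk
    push_cast at hk
    nlinarith [hlogL0, (by positivity : (0:ℝ) ≤ 2*(m:ℝ))]
  rcases Nat.lt_or_ge m 3 with hm2' | hm3
  · -- exponent 2 : a single set suffices
    have hm2'' : m = 2 := by omega
    have i0 : Fin k := ⟨0, by omega⟩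
    have huniv : subsetSums (B i0) = Finset.univ := by
      apply Finset.eq_univ_of_forall
      intro g
      have hg := univ_subset_nsmul (hB i0) hm hm1 (Finset.mem_univ g)
      rwa [hm2'', show (2-1 : ℕ) = 1 from rfl, one_nsmul] at hg
    rw [← Finset.add_sum_erase Finset.univ (fun i => subsetSums (B i)) (Finset.mem_univ i0),
      huniv]
    apply univ_add_eq
    exact Finset.sum_induction _ (fun Z => (0:G) ∈ Z)
      (fun a b ha hb => by simpa using Finset.add_mem_add ha hb)
      (Finset.mem_zero.2 rfl) (fun i _ => zero_mem_subsetSums (B i))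
  -- list setup
  have hmR : (3:ℝ) ≤ (m:ℝ) := by exact_mod_cast hm3
  set l : List (Finset G) := List.ofFn B with hldef
  have hlen : l.length = k := List.length_ofFn
  have hgen : ∀ S ∈ l, AddSubgroup.closure (S : Set G) = ⊤ := by
    intro S hSmem
    rw [hldef, List.mem_ofFn] at hSmem
    obtain ⟨i, rfl⟩ := Set.mem_range.1 hSmem
    exact hB i
  have hsum : (∑ i, subsetSums (B i)) = (l.map subsetSums).sum := by
    rw [hldef, List.map_ofFn, List.sum_ofFn]
    rfl
  rcases le_or_gt 1 (Real.log (Real.logb 2 (Fintype.card G))) with hL1 | hL1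
  · -- MAIN CASE
    have hM1 : (0:ℝ) < (m:ℝ) - 1 := by linarith
    have hc0 : (0:ℝ) ≤ ((m:ℝ)-2)/((m:ℝ)-1) := div_nonneg (by linarith) (by linarith)
    set t := Nat.floor (((m:ℝ)-1) * Real.log (Real.logb 2 (Fintype.card G))) + 1 with htdef
    have hfl0 : (0:ℝ) ≤ ((m:ℝ)-1) * Real.log (Real.logb 2 (Fintype.card G)) :=
      mul_nonneg (by linarith) hlogL0
    have htR : ((m:ℝ)-1) * Real.log (Real.logb 2 (Fintype.card G)) < (t:ℝ) := by
      rw [htdef]; push_cast; exact Nat.lt_floor_add_one _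
    have ht_le : (t:ℝ) ≤ ((m:ℝ)-1) * Real.log (Real.logb 2 (Fintype.card G)) + 1 := by
      rw [htdef]; push_cast
      have := Nat.floor_le hfl0
      linarith
    have h2t : 2 * t ≤ k := by
      have hcast2t : ((2*t : ℕ) : ℝ) = 2*(t:ℝ) := by push_cast; ring
      have h1 : ((2*t : ℕ) : ℝ) ≤ 2*((m:ℝ)-1)*Real.log (Real.logb 2 (Fintype.card G)) + 2 := by
        rw [hcast2t]; linarith
      have h2 : 2*((m:ℝ)-1)*Real.log (Real.logb 2 (Fintype.card G)) + 2
          ≤ 2*(m:ℝ)*Real.log (Real.logb 2 (Fintype.card G)) := by nlinarith [hL1]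
      have h3 : ((2*t : ℕ):ℝ) < (k:ℝ) := by linarith [hk]
      exact le_of_lt (by exact_mod_cast h3)
    have half : ∀ l' : List (Finset G), l'.length = t →
        (∀ S ∈ l', AddSubgroup.closure (S : Set G) = ⊤) →
        (Fintype.card G : ℝ) < 2 * (((l'.map subsetSums).sum.card : ℕ) : ℝ) := by
      intro l' hlen' hgen'
      have hchain := chain hm hm3 l' hgen'
      rw [hlen'] at hchain
      have hexp : ((m:ℝ)-2)/((m:ℝ)-1) ≤ Real.exp (-(1/((m:ℝ)-1))) := by
        have h1 := Real.add_one_le_exp (-(1/((m:ℝ)-1)))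
        have h2 : -(1/((m:ℝ)-1)) + 1 = ((m:ℝ)-2)/((m:ℝ)-1) := by field_simp; ring
        linarith
      have hct : (((m:ℝ)-2)/((m:ℝ)-1)) ^ t ≤ Real.exp (-((t:ℝ)/((m:ℝ)-1))) := by
        calc (((m:ℝ)-2)/((m:ℝ)-1)) ^ t ≤ (Real.exp (-(1/((m:ℝ)-1)))) ^ t :=
              pow_le_pow_left₀ hc0 hexp t
        _ = Real.exp ((t:ℝ) * (-(1/((m:ℝ)-1)))) := (Real.exp_nat_mul _ t).symm
        _ = Real.exp (-((t:ℝ)/((m:ℝ)-1))) := by ring_nf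
      have hLlt : Real.logb 2 (Fintype.card G) < Real.exp ((t:ℝ)/((m:ℝ)-1)) := by
        rw [← Real.exp_log hLpos]
        apply Real.exp_lt_exp.2
        rw [lt_div_iff₀ hM1]
        linarith [htR]
      have hctL : (((m:ℝ)-2)/((m:ℝ)-1))^t * Real.logb 2 (Fintype.card G) < 1 := by
        calc (((m:ℝ)-2)/((m:ℝ)-1))^t * Real.logb 2 (Fintype.card G)
            ≤ Real.exp (-((t:ℝ)/((m:ℝ)-1))) * Real.logb 2 (Fintype.card G) :=
              mul_le_mul_of_nonneg_right hct (le_of_lt hLpos)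
        _ < Real.exp (-((t:ℝ)/((m:ℝ)-1))) * Real.exp ((t:ℝ)/((m:ℝ)-1)) :=
              mul_lt_mul_of_pos_left hLlt (Real.exp_pos _)
        _ = 1 := by rw [← Real.exp_add, neg_add_cancel, Real.exp_zero]
      have hlog2pos : (0:ℝ) < Real.log 2 := Real.log_pos (by norm_num)
      have hlogn : Real.log ((Fintype.card G : ℕ) : ℝ)
          = Real.logb 2 (Fintype.card G) * Real.log 2 := by
        rw [Real.logb]
        field_simp
      have hkey : (((m:ℝ)-2)/((m:ℝ)-1)) ^ t * Real.log ((Fintype.card G : ℕ):ℝ) < Real.log 2 := by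
        rw [hlogn]
        calc (((m:ℝ)-2)/((m:ℝ)-1))^t * (Real.logb 2 (Fintype.card G) * Real.log 2)
            = ((((m:ℝ)-2)/((m:ℝ)-1))^t * Real.logb 2 (Fintype.card G)) * Real.log 2 := by ring
        _ < 1 * Real.log 2 := mul_lt_mul_of_pos_right hctL hlog2pos
        _ = Real.log 2 := one_mul _
      have hx1 : 1 ≤ (l'.map subsetSums).sum.card :=
        Finset.card_pos.2 ⟨0, zero_mem_listsum l'⟩
      have hxpos : (0:ℝ) < (((l'.map subsetSums).sum.card : ℕ):ℝ) := by exact_mod_cast hx1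
      have hnpos : (0:ℝ) < ((Fintype.card G : ℕ):ℝ) := by linarith
      have hfinal : Real.log ((Fintype.card G : ℕ):ℝ)
          < Real.log (2 * (((l'.map subsetSums).sum.card : ℕ):ℝ)) := by
        rw [Real.log_mul (by norm_num) (ne_of_gt hxpos)]
        linarith [hchain, hkey]
      exact (Real.log_lt_log_iff hnpos (by linarith)).1 hfinal
    have htk : t ≤ k := by omega
    have hlen₁ : (l.take t).length = t := by
      rw [List.length_take, hlen]; omega
    have hlen₂ : ((l.drop t).take t).length = t := by
      rw [List.length_take, List.length_drop, hlen]; omega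
    have hgen₁ : ∀ S ∈ l.take t, AddSubgroup.closure (S : Set G) = ⊤ :=
      fun S hS => hgen S (List.take_subset t l hS)
    have hgen₂ : ∀ S ∈ (l.drop t).take t, AddSubgroup.closure (S : Set G) = ⊤ :=
      fun S hS => hgen S (List.drop_subset t l (List.take_subset t (l.drop t) hS))
    have hX := half (l.take t) hlen₁ hgen₁
    have hY := half ((l.drop t).take t) hlen₂ hgen₂
    have hsplit : (l.map subsetSums).sum
        = ((l.take t).map subsetSums).sum
          + ((((l.drop t).take t).map subsetSums).sum + (((l.drop t).drop t).map subsetSums).sum) := by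
      conv_lhs => rw [← List.take_append_drop t l]
      rw [List.map_append, List.sum_append]
      congr 1
      conv_lhs => rw [← List.take_append_drop t (l.drop t)]
      rw [List.map_append, List.sum_append]
    have hcardXY : Fintype.card G
        < ((l.take t).map subsetSums).sum.card + (((l.drop t).take t).map subsetSums).sum.card := by
      have h := add_lt_add hX hY
      have : (Fintype.card G : ℝ)
          < (((l.take t).map subsetSums).sum.card : ℝ)
            + ((((l.drop t).take t).map subsetSums).sum.card : ℝ) := by linarith
      exact_mod_cast this
    rw [hsum, hsplit, ← add_assoc, add_eq_univ_of_card hcardXY]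
    exact univ_add_eq (zero_mem_listsum _)
  · -- SMALL CASE : log (logb 2 n) < 1  forces n ≤ 6
    have hexp1 : Real.exp 1 < 2.7182818286 := Real.exp_one_lt_d9
    have hn6 : Fintype.card G ≤ 6 := by
      by_contra h7
      push_neg at h7
      have h7' : (7:ℝ) ≤ (Fintype.card G : ℝ) := by exact_mod_cast h7
      have hlog7 : (14/5 : ℝ) ≤ Real.logb 2 (Fintype.card G) := by
        rw [Real.le_logb_iff_rpow_le (by norm_num) (by positivity)]
        calc (2:ℝ) ^ ((14:ℝ)/5) = (2:ℝ) ^ (((14:ℕ):ℝ)/((5:ℕ):ℝ)) := by norm_num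
        _ ≤ 7 := rpow_le_of_pow (by norm_num) 14 5 (by norm_num) (by norm_num)
        _ ≤ _ := h7'
      have hcontr : (1:ℝ) ≤ Real.log (Real.logb 2 (Fintype.card G)) := by
        rw [Real.le_log_iff_exp_le hLpos]
        calc Real.exp 1 ≤ 2.7182818286 := le_of_lt hexp1
        _ ≤ 14/5 := by norm_num
        _ ≤ _ := hlog7
      linarith
    have hkn : Fintype.card G - 1 ≤ k := by
      rcases eq_or_lt_of_le hn2 with h2 | h3
      · omega
      · rcases le_or_gt 4 (Fintype.card G) with h4 | h4
        · have h4' : (4:ℝ) ≤ (Fintype.card G : ℝ) := by exact_mod_cast h4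
          have hlogb2 : (2:ℝ) ≤ Real.logb 2 (Fintype.card G) := by
            rw [Real.le_logb_iff_rpow_le (by norm_num) (by positivity)]
            calc (2:ℝ) ^ (2:ℝ) = (2:ℝ) ^ (((2:ℕ):ℝ)/((1:ℕ):ℝ)) := by norm_num
            _ ≤ 4 := rpow_le_of_pow (by norm_num) 2 1 (by norm_num) (by norm_num)
            _ ≤ _ := h4'
          have hlgL : Real.log 2 ≤ Real.log (Real.logb 2 (Fintype.card G)) :=
            Real.log_le_log (by norm_num) hlogb2
          have hlog2 := log_two_gt_twothirds
          have h6 : (4:ℝ) < 2*(m:ℝ)*Real.log (Real.logb 2 (Fintype.card G)) := by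
            nlinarith [hmR, hlgL, hlog2, hlogL0]
          have hn6' : ((Fintype.card G:ℝ)) ≤ 6 := by exact_mod_cast hn6
          have hklt : ((Fintype.card G:ℝ)) - 2 < (k:ℝ) := by linarith [hk]
          have : Fintype.card G - 2 < k := by
            have hcast : ((Fintype.card G - 2 : ℕ):ℝ) = (Fintype.card G:ℝ) - 2 := by
              push_cast [Nat.cast_sub hn2]; ring
            exact_mod_cast hcast ▸ hklt
          omega
        · -- n = 3
          have h3' : Fintype.card G = 3 := by omega
          have h3R : ((Fintype.card G):ℝ) = 3 := by exact_mod_cast h3'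
          have hlogb32 : (3/2:ℝ) ≤ Real.logb 2 (Fintype.card G) := by
            rw [Real.le_logb_iff_rpow_le (by norm_num) (by positivity), h3R]
            calc (2:ℝ) ^ ((3:ℝ)/2) = (2:ℝ) ^ (((3:ℕ):ℝ)/((2:ℕ):ℝ)) := by norm_num
            _ ≤ 3 := rpow_le_of_pow (by norm_num) 3 2 (by norm_num) (by norm_num)
          have hlgL : Real.log (3/2:ℝ) ≤ Real.log (Real.logb 2 (Fintype.card G)) :=
            Real.log_le_log (by norm_num) hlogb32
          have hgt := log_threehalf_gt_sixth
          have h1 : (1:ℝ) < 2*(m:ℝ)*Real.log (Real.logb 2 (Fintype.card G)) := by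
            nlinarith [hmR, hlgL, hgt, hlogL0]
          have : (1:ℝ) < (k:ℝ) := by linarith [hk]
          have : 1 < k := by exact_mod_cast this
          omega
    have hmin := card_listsum_ge l hgen
    rw [hlen] at hmin
    have hminEq : min (Fintype.card G) (k+1) = Fintype.card G := min_eq_left (by omega)
    rw [hminEq] at hmin
    rw [hsum]
    exact Finset.eq_univ_of_card _ (le_antisymm (Finset.card_le_univ _) hmin)
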